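/- There exists a constant C > 0 such that for every complex z with Re(z) ≥ 1 and every real ε with |ε| ≤ 1/2: e^{−C|ε|} ≤ |Γ(z) · exp(ε Log z) / Γ(z + ε)| ≤ e^{C|ε|}, where Log denotes the principal branch of the complex logarithm. -/

import Mathlib

open Complex Filter Finset intervalIntegral

lemma my_ne_zero {w : ℂ} (hw : 0 < w.re) : w ≠ 0 := by
  intro h; rw [h] at hw; simp at hw

lemma ftc_clog (c : ℂ) (a b : ℝ) (h : ∀ t ∈ Set.uIcc a b, 0 < (c + t).re) :
    (∫ t in a..b, (c + t)⁻¹) = Complex.log (c + b) - Complex.log (c + a) := by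
  apply intervalIntegral.integral_eq_sub_of_hasDerivAt
  · intro t ht
    have h1 : HasDerivAt (fun w : ℂ => Complex.log (c + w)) (c + t)⁻¹ (t : ℂ) := by
      have h1' := (Complex.hasDerivAt_log (Or.inl (h t ht))).comp (t : ℂ)
        ((hasDerivAt_id (t : ℂ)).const_add c)
      rw [mul_one] at h1'; exact h1'
    exact h1.comp_ofReal
  · apply ContinuousOn.intervalIntegrable
    exact ContinuousOn.inv₀ (continuous_const.add Complex.continuous_ofReal).continuousOn
      (fun t ht => my_ne_zero (h t ht))

lemma trapezoid_bound {w : ℂ} {m : ℝ} (hm : 0 < m) (hw : m ≤ w.re) :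
    ‖Complex.log (w + 1) - Complex.log w - w⁻¹‖ ≤ (m * m)⁻¹ := by
  have hre : ∀ t : ℝ, 0 ≤ t → 0 < (w + t).re := by
    intro t ht
    simp only [Complex.add_re, Complex.ofReal_re]
    linarith
  have habs : ∀ t : ℝ, 0 ≤ t → m ≤ ‖w + t‖ := by
    intro t ht
    exact le_trans (by simp only [Complex.add_re, Complex.ofReal_re]; linarith)
      (Complex.re_le_norm _)
  have h1 : (∫ t in (0:ℝ)..1, (w + t)⁻¹) = Complex.log (w + 1) - Complex.log w := by
    have := ftc_clog w 0 1 (fun t ht => hre t (by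
      rw [Set.uIcc_of_le (by norm_num : (0:ℝ) ≤ 1)] at ht; exact ht.1))
    simpa using this
  have h2 : (∫ t in (0:ℝ)..1, (w⁻¹ : ℂ)) = w⁻¹ := by simp
  rw [← h1, ← h2, ← intervalIntegral.integral_sub]
  · have := intervalIntegral.norm_integral_le_of_norm_le_const
      (C := (m*m)⁻¹) (f := fun t : ℝ => (w + t)⁻¹ - w⁻¹) (a := 0) (b := 1) ?_
    · simpa using this
    · intro t ht
      rw [Set.uIoc_of_le (by norm_num : (0:ℝ) ≤ 1)] at ht
      have ht0 : 0 ≤ t := le_of_lt ht.1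
      have hw0 : w ≠ 0 := my_ne_zero (lt_of_lt_of_le hm hw)
      have hwt0 : w + t ≠ 0 := my_ne_zero (hre t ht0)
      have hid : (w + t)⁻¹ - w⁻¹ = -(t : ℂ) / ((w + t) * w) := by
        field_simp
        ring
      show ‖(w + ↑t)⁻¹ - w⁻¹‖ ≤ (m*m)⁻¹
      rw [hid, norm_div, norm_neg]
      have hnum : ‖(t : ℂ)‖ ≤ 1 := by
        rw [Complex.norm_real, Real.norm_eq_abs, _root_.abs_of_nonneg ht0]; exact ht.2
      have hden : m * m ≤ ‖(w + t) * w‖ := by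
        rw [norm_mul]
        exact mul_le_mul (habs t ht0) (by simpa using habs 0 le_rfl)
          (le_of_lt hm) (le_trans (le_of_lt hm) (habs t ht0))
      calc ‖(t:ℂ)‖ / ‖(w + t) * w‖ ≤ 1 / (m * m) := by
            apply div_le_div₀ (by norm_num) hnum (by positivity) hden
        _ = (m * m)⁻¹ := one_div _
  · exact ContinuousOn.intervalIntegrable (ContinuousOn.inv₀
      (continuous_const.add Complex.continuous_ofReal).continuousOn
      (fun t ht => my_ne_zero (hre t (by
        rw [Set.uIcc_of_le (by norm_num : (0:ℝ) ≤ 1)] at ht; exact ht.1))))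
  · exact intervalIntegrable_const

lemma sum_sq_bound : ∀ n : ℕ, ∑ j ∈ Finset.range (n+1), (((j:ℝ) + 1/2) * ((j:ℝ) + 1/2))⁻¹
    ≤ 5 - ((n:ℝ) + 1)⁻¹ := by
  intro n
  induction n with
  | zero => norm_num
  | succ k ih =>
    rw [Finset.sum_range_succ]
    have hK : (0:ℝ) ≤ (k:ℝ) := Nat.cast_nonneg k
    have key : ((((k+1:ℕ):ℝ) + 1/2) * (((k+1:ℕ):ℝ) + 1/2))⁻¹
        ≤ ((k:ℝ) + 1)⁻¹ - ((k:ℝ) + 2)⁻¹ := by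
      push_cast
      have h1 : ((k:ℝ) + 1)⁻¹ - ((k:ℝ) + 2)⁻¹ = (((k:ℝ) + 1) * ((k:ℝ) + 2))⁻¹ := by
        rw [mul_inv]
        field_simp
        ring
      rw [h1]
      apply inv_anti₀ (by positivity)
      nlinarith
    push_cast at key ⊢
    have h2 : ((k:ℝ) + 1 + 1)⁻¹ = ((k:ℝ) + 2)⁻¹ := by ring_nf
    rw [h2]
    linarith

lemma sum_inv_est {z : ℂ} (hz : 1 ≤ z.re) {s : ℝ} (hs : |s| ≤ 1/2) (n : ℕ) :
    ‖(∑ j ∈ Finset.range (n+1), (z + s + j)⁻¹) -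
      (Complex.log (z + s + n + 1) - Complex.log (z + s))‖ ≤ 5 := by
  have hs' := abs_le.mp hs
  have hre : ∀ j : ℕ, (j:ℝ) + 1/2 ≤ (z + s + j).re := by
    intro j
    simp only [Complex.add_re, Complex.ofReal_re, Complex.natCast_re]
    linarith
  have htel : Complex.log (z + s + n + 1) - Complex.log (z + s) =
      ∑ j ∈ Finset.range (n+1),
        (Complex.log ((z + s + j) + 1) - Complex.log (z + s + j)) := by
    have h0 := Finset.sum_range_sub (fun j : ℕ => Complex.log (z + s + j)) (n+1)
    have h1 : ∀ j : ℕ, z + (s:ℂ) + ((j+1 : ℕ) : ℂ) = (z + s + j) + 1 := by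
      intro j; push_cast; ring
    have h2 : (z : ℂ) + s + ((0 : ℕ) : ℂ) = z + s := by push_cast; ring
    simp only [h1, h2] at h0
    exact h0.symm
  have hcongr : ∀ j ∈ Finset.range (n+1),
      Complex.log (z + s + ((j+1 : ℕ) : ℂ)) - Complex.log (z + s + (j : ℂ)) =
      Complex.log ((z + s + j) + 1) - Complex.log (z + s + j) := by
    intro j _
    congr 2
    push_cast; ring
  calc ‖(∑ j ∈ Finset.range (n+1), (z + s + j)⁻¹) -
          (Complex.log (z + s + n + 1) - Complex.log (z + s))‖
      = ‖∑ j ∈ Finset.range (n+1),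
          ((z + s + j)⁻¹ - (Complex.log ((z + s + j) + 1) - Complex.log (z + s + j)))‖ := by
        rw [htel, ← Finset.sum_sub_distrib]
    _ ≤ ∑ j ∈ Finset.range (n+1),
          ‖(z + s + j)⁻¹ - (Complex.log ((z + s + j) + 1) - Complex.log (z + s + j))‖ :=
        norm_sum_le _ _
    _ ≤ ∑ j ∈ Finset.range (n+1), (((j:ℝ) + 1/2) * ((j:ℝ) + 1/2))⁻¹ := by
        apply Finset.sum_le_sum
        intro j _
        have := trapezoid_bound (w := z + s + j) (m := (j:ℝ) + 1/2) (by positivity) (hre j)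
        calc ‖(z + s + j)⁻¹ - (Complex.log ((z + s + j) + 1) - Complex.log (z + s + j))‖
            = ‖Complex.log ((z + s + j) + 1) - Complex.log (z + s + j) - (z + s + j)⁻¹‖ := by
              rw [← norm_neg]; congr 1; ring
          _ ≤ (((j:ℝ) + 1/2) * ((j:ℝ) + 1/2))⁻¹ := this
    _ ≤ 5 - ((n:ℝ)+1)⁻¹ := sum_sq_bound n
    _ ≤ 5 := by
        have : (0:ℝ) < (n:ℝ) + 1 := by positivity
        have := inv_pos.mpr this
        linarith

lemma abs_log_le_one {x : ℝ} (h1 : 1/2 ≤ x) (h2 : x ≤ 2) : |Real.log x| ≤ 1 := by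
  have hlog2 : Real.log 2 ≤ 1 := by
    have := Real.log_two_lt_d9
    linarith
  rw [abs_le]
  constructor
  · have h3 : Real.log (1/2) ≤ Real.log x := Real.log_le_log (by norm_num) h1
    have h4 : Real.log (1/2) = - Real.log 2 := by
      rw [one_div, Real.log_inv]
    linarith
  · have h3 : Real.log x ≤ Real.log 2 := Real.log_le_log (by linarith) h2
    linarith

lemma H_bound {z : ℂ} (hz : 1 ≤ z.re) {s : ℝ} (hs : |s| ≤ 1/2) {n : ℕ} (hn : 1 ≤ n) :
    |Real.log ‖z‖ - Real.log n +
        ∑ j ∈ Finset.range (n+1), ((z + s + j)⁻¹).re|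
      ≤ 6 + Real.log (((n:ℝ) + ‖z‖ + 2) / n) := by
  have hs' := abs_le.mp hs
  set A := ‖z‖ with hA
  have hA1 : 1 ≤ A := le_trans hz (Complex.re_le_norm z)
  have hn0 : (0:ℝ) < n := by exact_mod_cast hn
  set B := ‖z + s‖ with hB
  set E := ‖z + s + n + 1‖ with hE
  have hB0 : A - 1/2 ≤ B ∧ B ≤ A + 1/2 := by
    constructor
    · have : A ≤ B + |s| := by
        calc A = ‖(z + s) + ((-s : ℝ) : ℂ)‖ := by rw [hA]; congr 1; push_cast; ring
          _ ≤ B + ‖((-s : ℝ) : ℂ)‖ := norm_add_le _ _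
          _ = B + |s| := by rw [Complex.norm_real, Real.norm_eq_abs, abs_neg]
      linarith
    · have : B ≤ A + |s| := by
        calc B ≤ A + ‖((s : ℝ) : ℂ)‖ := norm_add_le _ _
          _ = A + |s| := by rw [Complex.norm_real, Real.norm_eq_abs]
      linarith
  have hBpos : 0 < B := by linarith [hB0.1]
  -- bound 1 : |log A - log B| ≤ 1
  have bound1 : |Real.log A - Real.log B| ≤ 1 := by
    have hq : Real.log B - Real.log A = Real.log (B / A) := by
      rw [Real.log_div (by positivity) (by positivity)]
    have h12 : 1/2 ≤ B / A := by
      rw [le_div_iff₀ (by linarith)]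
      nlinarith [hB0.1]
    have h22 : B / A ≤ 2 := by
      rw [div_le_iff₀ (by linarith)]
      nlinarith [hB0.2]
    have := abs_log_le_one h12 h22
    rw [← hq] at this
    rw [abs_sub_comm] at this
    exact this
  -- bound 2 : 0 ≤ log E - log n ≤ log ((n+A+2)/n)
  have hEn : (n:ℝ) ≤ E := by
    have : (n:ℝ) ≤ (z + s + n + 1).re := by
      simp only [Complex.add_re, Complex.ofReal_re, Complex.natCast_re, Complex.one_re]
      linarith
    exact le_trans this (Complex.re_le_norm _)
  have hEup : E ≤ (n:ℝ) + A + 2 := by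
    have hsplit : z + (s:ℂ) + n + 1 = (z + s) + ((n:ℂ) + 1) := by ring
    calc E = ‖(z + s) + ((n:ℂ) + 1)‖ := by rw [hE, hsplit]
      _ ≤ B + ‖(n:ℂ) + 1‖ := norm_add_le _ _
      _ = B + ((n:ℝ) + 1) := by
          rw [show ((n:ℂ) + 1) = (((n+1 : ℕ)) : ℂ) by push_cast; ring, Complex.norm_natCast]
          push_cast; ring
      _ ≤ (n:ℝ) + A + 2 := by linarith [hB0.2]
  have bound2a : Real.log n ≤ Real.log E := Real.log_le_log hn0 hEn
  have bound2b : Real.log E - Real.log n ≤ Real.log (((n:ℝ) + A + 2) / n) := by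
    rw [Real.log_div (by linarith) (by linarith)]
    have : Real.log E ≤ Real.log ((n:ℝ) + A + 2) :=
      Real.log_le_log (by linarith) hEup
    linarith
  -- main decomposition
  have hD := sum_inv_est hz hs n
  set D := (∑ j ∈ Finset.range (n+1), (z + s + j)⁻¹) -
      (Complex.log (z + s + n + 1) - Complex.log (z + s)) with hDdef
  have hDre : |D.re| ≤ 5 := le_trans (Complex.abs_re_le_norm D) hD
  have hsum : ∑ j ∈ Finset.range (n+1), ((z + s + j)⁻¹).re
      = Real.log E - Real.log B + D.re := by
    have h1 : (∑ j ∈ Finset.range (n+1), (z + s + j)⁻¹).re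
        = ∑ j ∈ Finset.range (n+1), ((z + s + j)⁻¹).re := by
      exact Complex.re_sum _ _
    have h2 : (∑ j ∈ Finset.range (n+1), (z + s + j)⁻¹)
        = (Complex.log (z + s + n + 1) - Complex.log (z + s)) + D := by
      rw [hDdef]; ring
    rw [← h1, h2]
    simp only [Complex.add_re, Complex.sub_re, Complex.log_re]
    rfl
  rw [hsum]
  have hb2 : |Real.log E - Real.log n| ≤ Real.log (((n:ℝ) + A + 2) / n) := by
    rw [abs_le]
    constructor
    · have h0 : 0 ≤ Real.log (((n:ℝ) + A + 2) / n) := le_trans (by linarith) bound2b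
      linarith
    · exact bound2b
  obtain ⟨b1l, b1u⟩ := abs_le.mp bound1
  obtain ⟨b2l, b2u⟩ := abs_le.mp hb2
  obtain ⟨bDl, bDu⟩ := abs_le.mp hDre
  rw [abs_le]
  constructor <;> [linarith; linarith]

/-- Quantitative Gamma quotient estimate from Binet's formula:
`Γ(z)/Γ(z+ε) = z^{−ε} e^{h(z;ε)}` with `|h(z;ε)| ≤ C|ε|` uniformly on `Re(z) ≥ 1`,
phrased as `e^{−C|ε|} ≤ |Γ(z) e^{ε Log z} / Γ(z+ε)| ≤ e^{C|ε|}`. -/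

theorem gamma_quotient_binet_estimate :
    ∃ C > 0, ∀ z : ℂ, 1 ≤ z.re → ∀ ε : ℝ, |ε| ≤ 1/2 →
      Real.exp (-C * |ε|) ≤
          ‖Complex.Gamma z * Complex.exp ((ε:ℂ) * Complex.log z) /
              Complex.Gamma (z + (ε:ℂ))‖ ∧
        ‖Complex.Gamma z * Complex.exp ((ε:ℂ) * Complex.log z) /
            Complex.Gamma (z + (ε:ℂ))‖ ≤ Real.exp (C * |ε|) := by
  refine ⟨6, by norm_num, ?_⟩
  intro z hz ε hε
  have hε' := abs_le.mp hε
  set A := ‖z‖ with hA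
  have hA1 : 1 ≤ A := le_trans hz (Complex.re_le_norm z)
  have hzre : (0:ℝ) < z.re := by linarith
  have hzεre : (0:ℝ) < (z + ε).re := by
    simp only [Complex.add_re, Complex.ofReal_re]
    linarith [hε'.1]
  have hΓz : Complex.Gamma z ≠ 0 := Complex.Gamma_ne_zero_of_re_pos hzre
  have hΓzε : Complex.Gamma (z + ε) ≠ 0 := Complex.Gamma_ne_zero_of_re_pos hzεre
  set e0 : ℂ := Complex.exp ((ε:ℂ) * Complex.log z) with he0
  set Q : ℕ → ℂ := fun n => Complex.GammaSeq z n * e0 / Complex.GammaSeq (z + ε) n with hQdef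
  have hQtend : Filter.Tendsto (fun n => ‖Q n‖) Filter.atTop
      (nhds ‖Complex.Gamma z * e0 / Complex.Gamma (z + ε)‖) :=
    (((Complex.GammaSeq_tendsto_Gamma z).mul_const e0).div
      (Complex.GammaSeq_tendsto_Gamma (z + ε)) hΓzε).norm
  set δ : ℕ → ℝ := fun n => Real.log (((n:ℝ) + A + 2) / n) with hδ
  have hδ0 : ∀ n : ℕ, 1 ≤ n → 0 ≤ δ n := by
    intro n hn
    have hn0 : (0:ℝ) < n := by exact_mod_cast hn
    apply Real.log_nonneg
    rw [le_div_iff₀ hn0]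
    linarith
  have hδtend : Filter.Tendsto δ Filter.atTop (nhds 0) := by
    have h1 : Filter.Tendsto (fun n : ℕ => ((n:ℝ) + A + 2) / n) Filter.atTop (nhds 1) := by
      have h2 : (fun n : ℕ => 1 + (A + 2) / n) =ᶠ[Filter.atTop]
          (fun n : ℕ => ((n:ℝ) + A + 2) / n) := by
        filter_upwards [Filter.eventually_ge_atTop 1] with n hn
        have hn0 : ((n:ℝ)) ≠ 0 := by
          have : (0:ℝ) < n := by exact_mod_cast hn
          exact this.ne'
        field_simp
        ring
      have h3 : Filter.Tendsto (fun n : ℕ => 1 + (A + 2) / n) Filter.atTop (nhds (1 + 0)) :=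
        tendsto_const_nhds.add (Filter.Tendsto.div_atTop tendsto_const_nhds
          tendsto_natCast_atTop_atTop)
      rw [add_zero] at h3
      exact h3.congr' h2
    have h4 := (Real.continuousAt_log one_ne_zero).tendsto.comp h1
    rw [Real.log_one] at h4
    exact h4
  have key : ∀ n : ℕ, 1 ≤ n →
      Real.exp (-(6 * |ε|) - δ n) ≤ ‖Q n‖ ∧ ‖Q n‖ ≤ Real.exp (6 * |ε| + δ n) := by
    intro n hn
    have hn0 : (0:ℝ) < n := by exact_mod_cast hn
    have hrepos : ∀ (w : ℂ), 0 < w.re → ∀ j : ℕ, 0 < (w + j).re := by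
      intro w hw j
      simp only [Complex.add_re, Complex.natCast_re]
      have : (0:ℝ) ≤ j := Nat.cast_nonneg j
      linarith
    have hprod : ∀ w : ℂ, 0 < w.re → (∏ j ∈ Finset.range (n+1), (w + (j:ℂ))) ≠ 0 := by
      intro w hw
      exact Finset.prod_ne_zero_iff.mpr fun j _ => my_ne_zero (hrepos w hw j)
    have hGSne : ∀ w : ℂ, 0 < w.re → Complex.GammaSeq w n ≠ 0 := by
      intro w hw
      rw [Complex.GammaSeq]
      apply div_ne_zero (mul_ne_zero ?_ ?_) (hprod w hw)
      · exact norm_pos_iff.mp (Complex.norm_natCast_cpow_pos_of_pos hn w)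
      · exact_mod_cast Nat.factorial_ne_zero n
    have hQn0 : Q n ≠ 0 := div_ne_zero (mul_ne_zero (hGSne z hzre)
      (Complex.exp_ne_zero _)) (hGSne (z + ε) hzεre)
    have hQpos : 0 < ‖Q n‖ := norm_pos_iff.mpr hQn0
    have hGSnorm : ∀ w : ℂ, ‖Complex.GammaSeq w n‖ =
        (n:ℝ) ^ w.re * (n.factorial : ℝ) / ∏ j ∈ Finset.range (n+1), ‖w + j‖ := by
      intro w
      rw [Complex.GammaSeq, norm_div, norm_mul,
        Complex.norm_natCast_cpow_of_pos hn, Complex.norm_natCast,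
        norm_prod]
    have hGSlog : ∀ w : ℂ, 0 < w.re → Real.log ‖Complex.GammaSeq w n‖ =
        w.re * Real.log n + Real.log (n.factorial : ℝ)
          - ∑ j ∈ Finset.range (n+1), Real.log ‖w + j‖ := by
      intro w hw
      have habsne : ∀ j ∈ Finset.range (n+1), ‖w + (j:ℂ)‖ ≠ 0 :=
        fun j _ => norm_ne_zero_iff.mpr (my_ne_zero (hrepos w hw j))
      have hfact : ((n.factorial : ℝ)) ≠ 0 := by exact_mod_cast Nat.factorial_ne_zero n
      rw [hGSnorm w,
        Real.log_div (mul_ne_zero (Real.rpow_pos_of_pos hn0 _).ne' hfact)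
          (Finset.prod_ne_zero_iff.mpr habsne),
        Real.log_mul (Real.rpow_pos_of_pos hn0 _).ne' hfact,
        Real.log_rpow hn0, Real.log_prod habsne]
    have hQnorm : ‖Q n‖ = ‖Complex.GammaSeq z n‖ * Real.exp (ε * Real.log A) /
        ‖Complex.GammaSeq (z + ε) n‖ := by
      rw [hQdef]
      rw [norm_div, norm_mul]
      congr 2
      rw [he0, Complex.norm_exp, Complex.re_ofReal_mul, Complex.log_re]
    have hzεGSre : (z + (ε:ℂ)).re = z.re + ε := by simp
    have hlogQ : Real.log ‖Q n‖ = ε * Real.log A - ε * Real.log n +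
        ∑ j ∈ Finset.range (n+1),
          (Real.log ‖z + ε + j‖ - Real.log ‖z + j‖) := by
      rw [hQnorm,
        Real.log_div (mul_ne_zero (norm_ne_zero_iff.mpr (hGSne z hzre))
          (Real.exp_ne_zero _)) (norm_ne_zero_iff.mpr (hGSne (z + ε) hzεre)),
        Real.log_mul (norm_ne_zero_iff.mpr (hGSne z hzre)) (Real.exp_ne_zero _),
        Real.log_exp, hGSlog z hzre, hGSlog (z + ε) hzεre, hzεGSre,
        Finset.sum_sub_distrib]
      ring
    have hmem : ∀ t ∈ Set.uIcc (0:ℝ) ε, |t| ≤ 1/2 := by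
      intro t ht
      rw [Set.mem_uIcc] at ht
      rw [abs_le]
      rcases ht with h | h
      · exact ⟨by linarith [hε'.1], by linarith [hε'.2]⟩
      · exact ⟨by linarith [hε'.1], by linarith [hε'.2]⟩
    have hrepos2 : ∀ (j : ℕ) (t : ℝ), |t| ≤ 1/2 → 0 < (z + j + t).re := by
      intro j t ht
      simp only [Complex.add_re, Complex.natCast_re, Complex.ofReal_re]
      have h1 := abs_le.mp ht
      have h2 : (0:ℝ) ≤ j := Nat.cast_nonneg j
      linarith [h1.1]
    have hintg : ∀ j : ℕ, IntervalIntegrable (fun s : ℝ => (z + j + s)⁻¹)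
        MeasureTheory.volume 0 ε := by
      intro j
      apply ContinuousOn.intervalIntegrable
      exact ContinuousOn.inv₀ (continuous_const.add Complex.continuous_ofReal).continuousOn
        (fun t ht => my_ne_zero (hrepos2 j t (hmem t ht)))
    have hintgre : ∀ j ∈ Finset.range (n+1), IntervalIntegrable
        (fun s : ℝ => ((z + j + s)⁻¹).re) MeasureTheory.volume 0 ε := by
      intro j _
      apply ContinuousOn.intervalIntegrable
      exact Complex.continuous_re.comp_continuousOn
        (ContinuousOn.inv₀ (continuous_const.add Complex.continuous_ofReal).continuousOn
          (fun t ht => my_ne_zero (hrepos2 j t (hmem t ht))))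
    have hftc : ∀ j ∈ Finset.range (n+1),
        Real.log ‖z + ε + j‖ - Real.log ‖z + j‖ =
        ∫ s in (0:ℝ)..ε, ((z + j + s)⁻¹).re := by
      intro j _
      have h1 := ftc_clog (z + j) 0 ε (fun t ht => hrepos2 j t (hmem t ht))
      have h1' : (∫ s in (0:ℝ)..ε, (z + j + s)⁻¹) =
          Complex.log (z + j + ε) - Complex.log (z + j) := by
        simpa using h1
      have h2 := Complex.reCLM.intervalIntegral_comp_comm (hintg j)
      have horder : z + (ε:ℂ) + j = z + j + ε := by ring
      rw [horder]
      simp only [← Complex.log_re, ← Complex.sub_re, ← h1']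
      exact h2.symm
    have hsumft : ∑ j ∈ Finset.range (n+1),
        (Real.log ‖z + ε + j‖ - Real.log ‖z + j‖)
        = ∫ s in (0:ℝ)..ε, ∑ j ∈ Finset.range (n+1), ((z + j + s)⁻¹).re := by
      rw [intervalIntegral.integral_finset_sum hintgre]
      exact Finset.sum_congr rfl hftc
    have hsumint : IntervalIntegrable
        (fun s : ℝ => ∑ j ∈ Finset.range (n+1), ((z + j + s)⁻¹).re)
        MeasureTheory.volume 0 ε := by
      apply ContinuousOn.intervalIntegrable
      apply continuousOn_finset_sum
      intro j _
      exact Complex.continuous_re.comp_continuousOn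
        (ContinuousOn.inv₀ (continuous_const.add Complex.continuous_ofReal).continuousOn
          (fun t ht => my_ne_zero (hrepos2 j t (hmem t ht))))
    have hIQ : Real.log ‖Q n‖ = ∫ s in (0:ℝ)..ε,
        (Real.log A - Real.log n + ∑ j ∈ Finset.range (n+1), ((z + j + s)⁻¹).re) := by
      rw [intervalIntegral.integral_add intervalIntegrable_const hsumint,
        intervalIntegral.integral_const, hlogQ, hsumft]
      simp only [smul_eq_mul, sub_zero]
      ring
    have hbnd : |Real.log ‖Q n‖| ≤ (6 + δ n) * |ε| := by
      rw [hIQ]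
      have hb := intervalIntegral.norm_integral_le_of_norm_le_const (C := 6 + δ n)
        (f := fun s => Real.log A - Real.log n +
          ∑ j ∈ Finset.range (n+1), ((z + j + s)⁻¹).re)
        (a := 0) (b := ε) ?_
      · rw [Real.norm_eq_abs] at hb
        calc |∫ s in (0:ℝ)..ε, (Real.log A - Real.log n +
              ∑ j ∈ Finset.range (n+1), ((z + j + s)⁻¹).re)| ≤ (6 + δ n) * |ε - 0| := hb
          _ = (6 + δ n) * |ε| := by rw [sub_zero]
      · intro s hsΙ
        have hsmem : |s| ≤ 1/2 := by
          rw [Set.mem_uIoc] at hsΙ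
          rw [abs_le]
          rcases hsΙ with h | h
          · exact ⟨by linarith [hε'.1], by linarith [hε'.2]⟩
          · exact ⟨by linarith [hε'.1], by linarith [hε'.2]⟩
        have hHB := H_bound hz hsmem hn
        have hord : ∀ j : ℕ, z + (j:ℂ) + (s:ℂ) = z + s + j := fun j => by ring
        rw [Real.norm_eq_abs]
        simp only [hord]
        exact hHB
    have hδn := hδ0 n hn
    have habs2 : |Real.log ‖Q n‖| ≤ 6 * |ε| + δ n := by
      have h2 : δ n * |ε| ≤ δ n * 1 := by
        apply mul_le_mul_of_nonneg_left (le_trans hε (by norm_num)) hδn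
      calc |Real.log ‖Q n‖| ≤ (6 + δ n) * |ε| := hbnd
        _ = 6 * |ε| + δ n * |ε| := by ring
        _ ≤ 6 * |ε| + δ n := by linarith
    obtain ⟨hl, hu⟩ := abs_le.mp habs2
    constructor
    · rw [← Real.exp_log hQpos]
      exact Real.exp_le_exp.mpr (by linarith)
    · rw [← Real.exp_log hQpos]
      exact Real.exp_le_exp.mpr hu
  constructor
  · have hgt : Filter.Tendsto (fun n => Real.exp (-(6 * |ε|) - δ n)) Filter.atTop
        (nhds (Real.exp (-(6 * |ε|) - 0))) := (tendsto_const_nhds.sub hδtend).rexp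
    have hle := le_of_tendsto_of_tendsto hgt hQtend
      (by filter_upwards [Filter.eventually_ge_atTop 1] with n hn using (key n hn).1)
    have heq : -(6 * |ε|) - 0 = -6 * |ε| := by ring
    rw [heq] at hle
    exact hle
  · have hgt : Filter.Tendsto (fun n => Real.exp (6 * |ε| + δ n)) Filter.atTop
        (nhds (Real.exp (6 * |ε| + 0))) := (tendsto_const_nhds.add hδtend).rexp
    have hle := le_of_tendsto_of_tendsto hQtend hgt
      (by filter_upwards [Filter.eventually_ge_atTop 1] with n hn using (key n hn).2)
    have heq : 6 * |ε| + 0 = 6 * |ε| := by ring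
    rw [heq] at hle
    exact hle
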